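/- Let 1 < p < ∞ and let q = 1 or q = ∞. Then the Banach algebra B(X) of all bounded linear operators on the Banach space X = (⊕_{n∈ℕ} ℓ_q^n)_{ℓ_p} is not a Grothendieck space. -/

import Mathlib

set_option synthInstance.maxHeartbeats 1000000
set_option maxHeartbeats 1000000

open scoped ENNReal

/-- A Banach space `X` is a Grothendieck space if every weak*-convergent sequence in the
dual space `X*` converges weakly. -/
def IsGrothendieckSpace (X : Type*) [NormedAddCommGroup X] [NormedSpace ℝ X] : Prop :=
  ∀ (f : ℕ → (X →L[ℝ] ℝ)) (g : X →L[ℝ] ℝ),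
    (∀ x : X, Filter.Tendsto (fun n => f n x) Filter.atTop (nhds (g x))) →
    ∀ Φ : (X →L[ℝ] ℝ) →L[ℝ] ℝ,
      Filter.Tendsto (fun n => Φ (f n)) Filter.atTop (nhds (Φ g))

set_option linter.unusedSectionVars false

open Filter Topology


section Core

variable {Y : Type*} [NormedAddCommGroup Y] [NormedSpace ℝ Y]

/-- Abstract criterion for failure of the Grothendieck property. -/
theorem not_isGrothendieckSpace_core
    (a : Y → ℕ → ℕ → ℝ) (S : ℕ → Y)
    (ha_add : ∀ T T' n k, a (T + T') n k = a T n k + a T' n k)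
    (ha_smul : ∀ (c : ℝ) T n k, a (c • T) n k = c * a T n k)
    (ha_bdd : ∀ T K n, K ≤ n → ∑ k ∈ Finset.range K, |a T n k| ≤ ‖T‖)
    (hS : ∀ j, ‖S j‖ ≤ 1)
    (haS : ∀ j k n, j ≤ n → k ≤ n → a (S j) n k = if k = j then 1 else 0) :
    ¬ IsGrothendieckSpace Y := by
  intro H
  have hne : (atTop : Filter ℕ).NeBot := atTop_neBot
  set U : Ultrafilter ℕ := Ultrafilter.of atTop with hUdef
  have hUle : (U : Filter ℕ) ≤ atTop := Ultrafilter.of_le atTop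
  -- existence of limits along U for eventually bounded sequences
  have key : ∀ (u : ℕ → ℝ) (M : ℝ), (∀ᶠ n in atTop, |u n| ≤ M) →
      Tendsto u (U : Filter ℕ) (𝓝 (limUnder (U : Filter ℕ) u)) ∧
        |limUnder (U : Filter ℕ) u| ≤ M := by
    intro u M hM
    have hM' : ∀ᶠ n in (U : Filter ℕ), u n ∈ Set.Icc (-M) M := by
      filter_upwards [hM.filter_mono hUle] with n hn
      exact abs_le.mp hn
    have hle : (Ultrafilter.map u U : Filter ℝ) ≤ Filter.principal (Set.Icc (-M) M) := by
      rw [Ultrafilter.coe_map, le_principal_iff, mem_map]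
      exact hM'
    obtain ⟨L, hLmem, hL⟩ := (isCompact_Icc (a := -M) (b := M)).ultrafilter_le_nhds
      (Ultrafilter.map u U) hle
    have ht : Tendsto u (U : Filter ℕ) (𝓝 L) := by
      rwa [Ultrafilter.coe_map] at hL
    rw [ht.limUnder_eq]
    exact ⟨ht, abs_le.mpr hLmem⟩
  -- the limit functionals
  set l : Y → ℕ → ℝ := fun T k => limUnder (U : Filter ℕ) (fun n => a T n k) with hl_def
  have hbd1 : ∀ (T : Y) (k : ℕ), ∀ᶠ n in atTop, |a T n k| ≤ ‖T‖ := by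
    intro T k
    filter_upwards [eventually_ge_atTop (k + 1)] with n hn
    calc |a T n k| ≤ ∑ k' ∈ Finset.range (k + 1), |a T n k'| :=
          Finset.single_le_sum (f := fun k' => |a T n k'|) (fun i _ => abs_nonneg _)
            (Finset.self_mem_range_succ k)
      _ ≤ ‖T‖ := ha_bdd T (k + 1) n hn
  have hl : ∀ (T : Y) (k : ℕ), Tendsto (fun n => a T n k) (U : Filter ℕ) (𝓝 (l T k)) ∧
      |l T k| ≤ ‖T‖ := fun T k => key _ _ (hbd1 T k)
  have hl_add : ∀ (T T' : Y) (k : ℕ), l (T + T') k = l T k + l T' k := by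
    intro T T' k
    refine tendsto_nhds_unique (hl (T + T') k).1 ?_
    have := ((hl T k).1.add (hl T' k).1)
    refine this.congr fun n => (ha_add T T' n k).symm
  have hl_smul : ∀ (c : ℝ) (T : Y) (k : ℕ), l (c • T) k = c * l T k := by
    intro c T k
    refine tendsto_nhds_unique (hl (c • T) k).1 ?_
    have := (hl T k).1.const_mul c
    refine this.congr fun n => (ha_smul c T n k).symm
  -- the functionals φ k
  set φ : ℕ → (Y →L[ℝ] ℝ) := fun k => LinearMap.mkContinuous
    { toFun := fun T => l T k
      map_add' := fun T T' => hl_add T T' k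
      map_smul' := fun c T => hl_smul c T k }
    1 (fun T => by simpa [Real.norm_eq_abs] using (hl T k).2) with hφ_def
  have hφ_apply : ∀ k T, φ k T = l T k := fun _ _ => rfl
  have hφS : ∀ k j, φ k (S j) = if k = j then 1 else 0 := by
    intro k j
    have hev : ∀ᶠ n in atTop, a (S j) n k = if k = j then 1 else 0 := by
      filter_upwards [eventually_ge_atTop (max j k)] with n hn
      exact haS j k n (le_trans (le_max_left _ _) hn) (le_trans (le_max_right _ _) hn)
    have ht : Tendsto (fun n => a (S j) n k) (U : Filter ℕ) (𝓝 (if k = j then 1 else 0)) := by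
      refine Tendsto.congr' ?_ (tendsto_const_nhds)
      exact (hev.filter_mono hUle).mono fun n hn => hn.symm
    exact tendsto_nhds_unique (hl (S j) k).1 ht
  -- summability of the coefficients
  have hsum_abs : ∀ T : Y, ∀ K : ℕ, ∑ k ∈ Finset.range K, |l T k| ≤ ‖T‖ := by
    intro T K
    have ht : Tendsto (fun n => ∑ k ∈ Finset.range K, |a T n k|) (U : Filter ℕ)
        (𝓝 (∑ k ∈ Finset.range K, |l T k|)) := by
      refine tendsto_finset_sum _ fun k _ => (hl T k).1.abs
    have hev : ∀ᶠ n in (U : Filter ℕ), ∑ k ∈ Finset.range K, |a T n k| ≤ ‖T‖ := by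
      refine Eventually.filter_mono hUle ?_
      filter_upwards [eventually_ge_atTop K] with n hn
      exact ha_bdd T K n hn
    exact le_of_tendsto ht hev
  have hsummable_abs : ∀ T : Y, Summable (fun k => |l T k|) := fun T =>
    summable_of_sum_range_le (fun _ => abs_nonneg _) (hsum_abs T)
  have hsummable : ∀ T : Y, Summable (fun k => l T k) := fun T => (hsummable_abs T).of_abs
  -- the functional g
  set g : Y →L[ℝ] ℝ := LinearMap.mkContinuous
    { toFun := fun T => ∑' k, l T k
      map_add' := fun T T' => by
        simp only [hl_add]
        exact Summable.tsum_add (hsummable T) (hsummable T')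
      map_smul' := fun c T => by
        simp only [hl_smul, RingHom.id_apply, smul_eq_mul]
        exact tsum_mul_left }
    1 (fun T => by
      have h1 : ‖∑' k, l T k‖ ≤ ∑' k, |l T k| := by
        simpa [Real.norm_eq_abs] using norm_tsum_le_tsum_norm (f := fun k => l T k)
          (by simpa [Real.norm_eq_abs] using hsummable_abs T)
      have h2 : ∑' k, |l T k| ≤ ‖T‖ :=
        Real.tsum_le_of_sum_range_le (fun _ => abs_nonneg _) (hsum_abs T)
      simpa using h1.trans h2) with hg_def
  have hg_apply : ∀ T, g T = ∑' k, l T k := fun _ => rfl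
  -- the sequence f
  set f : ℕ → (Y →L[ℝ] ℝ) := fun m => ∑ k ∈ Finset.range m, φ k with hf_def
  have hf_apply : ∀ m T, f m T = ∑ k ∈ Finset.range m, l T k := by
    intro m T
    simp [hf_def, ContinuousLinearMap.sum_apply, hφ_apply]
  -- weak* convergence of f to g
  have hweak : ∀ T : Y, Tendsto (fun m => f m T) atTop (𝓝 (g T)) := by
    intro T
    have : (fun m => f m T) = fun m => ∑ k ∈ Finset.range m, l T k := funext fun m => hf_apply m T
    rw [this, hg_apply]
    exact (hsummable T).hasSum.tendsto_sum_nat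
  -- the bidual functional Φ
  have hΨbdd : ∀ ψ : Y →L[ℝ] ℝ, ∀ᶠ j in atTop, |ψ (S j)| ≤ ‖ψ‖ := by
    intro ψ
    refine Eventually.of_forall fun j => ?_
    calc |ψ (S j)| ≤ ‖ψ‖ * ‖S j‖ := ψ.le_opNorm (S j)
      _ ≤ ‖ψ‖ * 1 := by
          exact mul_le_mul_of_nonneg_left (hS j) (norm_nonneg ψ)
      _ = ‖ψ‖ := mul_one _
  have hΨ : ∀ ψ : Y →L[ℝ] ℝ, Tendsto (fun j => ψ (S j)) (U : Filter ℕ)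
      (𝓝 (limUnder (U : Filter ℕ) (fun j => ψ (S j)))) ∧
      |limUnder (U : Filter ℕ) (fun j => ψ (S j))| ≤ ‖ψ‖ := fun ψ => key _ _ (hΨbdd ψ)
  set Φ : (Y →L[ℝ] ℝ) →L[ℝ] ℝ := LinearMap.mkContinuous
    { toFun := fun ψ => limUnder (U : Filter ℕ) (fun j => ψ (S j))
      map_add' := fun ψ ψ' => by
        refine tendsto_nhds_unique (hΨ (ψ + ψ')).1 ?_
        have := ((hΨ ψ).1.add (hΨ ψ').1)
        refine this.congr fun j => by simp
      map_smul' := fun c ψ => by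
        refine tendsto_nhds_unique (hΨ (c • ψ)).1 ?_
        have := (hΨ ψ).1.const_mul c
        refine this.congr fun j => by simp }
    1 (fun ψ => by simpa [Real.norm_eq_abs] using (hΨ ψ).2) with hΦ_def
  have hΦ_apply : ∀ ψ, Φ ψ = limUnder (U : Filter ℕ) (fun j => ψ (S j)) := fun _ => rfl
  -- Φ (f m) = 0
  have hΦf : ∀ m, Φ (f m) = 0 := by
    intro m
    have hev : ∀ᶠ j in atTop, f m (S j) = 0 := by
      filter_upwards [eventually_ge_atTop m] with j hj
      rw [hf_apply]
      refine Finset.sum_eq_zero fun k hk => ?_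
      have hkj : k ≠ j := by
        have := Finset.mem_range.mp hk
        omega
      have := hφS k j
      rw [hφ_apply] at this
      rw [this, if_neg hkj]
    have ht : Tendsto (fun j => f m (S j)) (U : Filter ℕ) (𝓝 0) := by
      refine Tendsto.congr' ?_ tendsto_const_nhds
      exact (hev.filter_mono hUle).mono fun j hj => hj.symm
    rw [hΦ_apply]
    exact tendsto_nhds_unique (hΨ (f m)).1 ht
  -- Φ g = 1
  have hΦg : Φ g = 1 := by
    have hgS : ∀ j, g (S j) = 1 := by
      intro j
      rw [hg_apply]
      have : (fun k => l (S j) k) = fun k => if k = j then (1 : ℝ) else 0 := by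
        funext k
        have := hφS k j
        rwa [hφ_apply] at this
      rw [this]
      exact tsum_ite_eq j (fun _ => (1 : ℝ))
    have ht : Tendsto (fun j => g (S j)) (U : Filter ℕ) (𝓝 1) := by
      refine Tendsto.congr (fun j => (hgS j).symm) tendsto_const_nhds
    rw [hΦ_apply]
    exact tendsto_nhds_unique (hΨ g).1 ht
  -- contradiction
  have hT := H f g hweak Φ
  rw [hΦg] at hT
  have h0 : Tendsto (fun m => Φ (f m)) atTop (𝓝 0) := by
    refine Tendsto.congr (fun m => (hΦf m).symm) tendsto_const_nhds
  exact zero_ne_one (tendsto_nhds_unique h0 hT)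

end Core

section Constr

/-- Index in `Fin (n+1)` obtained from `m : ℕ` by truncation. -/
def fi (n m : ℕ) : Fin (n + 1) := ⟨min m n, by omega⟩

lemma fi_val (n m : ℕ) (h : m ≤ n) : ((fi n m : Fin (n + 1)) : ℕ) = m := by
  simp [fi, Nat.min_eq_left h]

/-- Basis vector in the `n`-th block. -/
noncomputable def bv (q : ℝ≥0∞) (n m : ℕ) : PiLp q (fun _ : Fin (n + 1) => ℝ) :=
  (WithLp.equiv q _).symm (Pi.single (fi n m) 1)

lemma bv_apply (q : ℝ≥0∞) (n m : ℕ) (i : Fin (n + 1)) :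
    bv q n m i = if i = fi n m then 1 else 0 := by
  simp [bv, WithLp.equiv_symm_apply, PiLp.toLp_apply, Pi.single_apply]

lemma piLp_sum_apply {q : ℝ≥0∞} {n : ℕ} {ι : Type*} (s : Finset ι)
    (F : ι → PiLp q (fun _ : Fin (n + 1) => ℝ)) (i : Fin (n + 1)) :
    (∑ k ∈ s, F k) i = ∑ k ∈ s, F k i := by
  classical
  induction s using Finset.cons_induction with
  | empty => simp
  | cons a s ha ih => rw [Finset.sum_cons, Finset.sum_cons, PiLp.add_apply, ih]

-- norms, case q = ⊤
lemma hL1_top (n : ℕ) (w : PiLp ⊤ (fun _ : Fin (n + 1) => ℝ)) (i : Fin (n + 1)) :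
    ‖w i‖ ≤ ‖w‖ := by
  rw [PiLp.norm_eq_ciSup]
  exact le_ciSup (Set.finite_range fun j => ‖w j‖).bddAbove i

lemma norm_top_le (n : ℕ) (w : PiLp ⊤ (fun _ : Fin (n + 1) => ℝ)) {C : ℝ}
    (h : ∀ i, ‖w i‖ ≤ C) : ‖w‖ ≤ C := by
  rw [PiLp.norm_eq_ciSup]
  exact ciSup_le h

lemma hbv_top (n m : ℕ) : ‖bv ⊤ n m‖ = 1 := by
  apply le_antisymm
  · refine norm_top_le n _ fun i => ?_
    rw [bv_apply]
    split <;> simp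
  · have := hL1_top n (bv ⊤ n m) (fi n m)
    rwa [bv_apply, if_pos rfl, norm_one] at this

-- norms, case q = 1
lemma norm_one_eq (n : ℕ) (w : PiLp 1 (fun _ : Fin (n + 1) => ℝ)) :
    ‖w‖ = ∑ i, ‖w i‖ := by
  rw [PiLp.norm_eq_sum (by simp : (0:ℝ) < (1 : ℝ≥0∞).toReal)]
  simp

lemma hL1_one (n : ℕ) (w : PiLp 1 (fun _ : Fin (n + 1) => ℝ)) (i : Fin (n + 1)) :
    ‖w i‖ ≤ ‖w‖ := by
  rw [norm_one_eq]
  exact Finset.single_le_sum (fun j _ => norm_nonneg _) (Finset.mem_univ i)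

lemma hbv_one (n m : ℕ) : ‖bv 1 n m‖ = 1 := by
  rw [norm_one_eq]
  have h : ∀ i : Fin (n + 1), ‖bv 1 n m i‖ = if i = fi n m then (1:ℝ) else 0 := by
    intro i
    rw [bv_apply]
    split <;> simp
  rw [Finset.sum_congr rfl fun i _ => h i]
  simp

variable (p q : ℝ≥0∞) [Fact (1 ≤ p)] [Fact (1 ≤ q)]

lemma lp_single_add (n : ℕ) (x y : PiLp q (fun _ : Fin (n + 1) => ℝ)) :
    lp.single (E := fun n : ℕ => PiLp q (fun _ : Fin (n + 1) => ℝ)) p n (x + y) =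
      lp.single p n x + lp.single p n y := by
  ext j
  by_cases h : j = n
  · subst h
    simp [lp.single_apply_self]
  · simp [lp.single_apply_ne p n _ h]

lemma lp_single_zero (n : ℕ) :
    lp.single (E := fun n : ℕ => PiLp q (fun _ : Fin (n + 1) => ℝ)) p n
      (0 : PiLp q (fun _ : Fin (n + 1) => ℝ)) = 0 := by
  ext j
  by_cases h : j = n
  · subst h
    rw [lp.single_apply_self]
    simp
  · rw [lp.single_apply_ne p n _ h]
    simp

lemma lp_single_sum {ι : Type*} (s : Finset ι) (n : ℕ)
    (f : ι → PiLp q (fun _ : Fin (n + 1) => ℝ)) :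
    lp.single (E := fun n : ℕ => PiLp q (fun _ : Fin (n + 1) => ℝ)) p n (∑ k ∈ s, f k) =
      ∑ k ∈ s, lp.single p n (f k) := by
  classical
  induction s using Finset.cons_induction with
  | empty => simpa using lp_single_zero p q n
  | cons b s hb ih => rw [Finset.sum_cons, Finset.sum_cons, lp_single_add, ih]

lemma norm_lp_single (hp0 : 0 < p.toReal) (n : ℕ)
    (w : PiLp q (fun _ : Fin (n + 1) => ℝ)) :
    ‖lp.single (E := fun n : ℕ => PiLp q (fun _ : Fin (n + 1) => ℝ)) p n w‖ = ‖w‖ := by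
  have := lp.norm_single (E := fun n : ℕ => PiLp q (fun _ : Fin (n + 1) => ℝ)) (ENNReal.toReal_pos_iff.mp hp0).1
    n w
  simpa [Function.update_self] using this

/-- The basic shift-type operators. -/
lemma exists_sop (hp0 : 0 < p.toReal)
    (hL1 : ∀ (n : ℕ) (w : PiLp q (fun _ : Fin (n + 1) => ℝ)) (i : Fin (n + 1)), ‖w i‖ ≤ ‖w‖)
    (hbv : ∀ n m : ℕ, ‖bv q n m‖ = (1:ℝ)) (u v : ℕ) :
    ∃ S : (lp (fun n : ℕ => PiLp q (fun _ : Fin (n + 1) => ℝ)) p) →L[ℝ]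
        (lp (fun n : ℕ => PiLp q (fun _ : Fin (n + 1) => ℝ)) p),
      (∀ x, ‖S x‖ ≤ ‖x‖) ∧
      (∀ (x : lp (fun n : ℕ => PiLp q (fun _ : Fin (n + 1) => ℝ)) p) (n : ℕ),
        (S x) n = (x n (fi n u)) • bv q n v) := by
  set E := fun n : ℕ => PiLp q (fun _ : Fin (n + 1) => ℝ) with hE
  have hF : ∀ (x : lp E p) (n : ℕ), ‖(x n (fi n u)) • bv q n v‖ ≤ ‖x n‖ := by
    intro x n
    rw [norm_smul, hbv, mul_one]
    exact hL1 n (x n) (fi n u)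
  have hmem : ∀ x : lp E p, Memℓp (fun n => (x n (fi n u)) • bv q n v) p := by
    intro x
    refine memℓp_gen ?_
    have sx : Summable fun n => ‖x n‖ ^ p.toReal := (memℓp_gen_iff hp0).mp (lp.memℓp x)
    exact Summable.of_nonneg_of_le (fun n => Real.rpow_nonneg (norm_nonneg _) _)
      (fun n => Real.rpow_le_rpow (norm_nonneg _) (hF x n) hp0.le) sx
  set Fm : lp E p →ₗ[ℝ] lp E p :=
    { toFun := fun x => ⟨fun n => (x n (fi n u)) • bv q n v, hmem x⟩
      map_add' := fun x y => by
        ext n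
        have h1 : ((x + y : lp E p) : ∀ n, E n) n (fi n u) = x n (fi n u) + y n (fi n u) := by
          rfl
        simp only [h1, add_smul]
        rfl
      map_smul' := fun c x => by
        ext n
        have h1 : ((c • x : lp E p) : ∀ n, E n) n (fi n u) = c * (x n (fi n u)) := by
          rfl
        simp only [h1, RingHom.id_apply, mul_smul]
        rfl } with hFm
  have hFm_apply : ∀ (x : lp E p) (n : ℕ), (Fm x) n = (x n (fi n u)) • bv q n v :=
    fun x n => rfl
  have hnorm : ∀ x : lp E p, ‖Fm x‖ ≤ ‖x‖ := by
    intro x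
    refine lp.norm_le_of_tsum_le hp0 (norm_nonneg x) ?_
    have hx : ∑' n, ‖x n‖ ^ p.toReal = ‖x‖ ^ p.toReal := (lp.norm_rpow_eq_tsum hp0 x).symm
    rw [← hx]
    refine Summable.tsum_le_tsum (fun n => ?_) ((memℓp_gen_iff hp0).mp (lp.memℓp (Fm x)))
      ((memℓp_gen_iff hp0).mp (lp.memℓp x))
    have : ‖(Fm x) n‖ ≤ ‖x n‖ := by
      rw [hFm_apply]
      exact hF x n
    exact Real.rpow_le_rpow (norm_nonneg _) this hp0.le
  exact ⟨Fm.mkContinuous 1 (fun x => by simpa using hnorm x), fun x => hnorm x, hFm_apply⟩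

end Constr

section Cases

theorem case_top (p : ℝ≥0∞) [Fact (1 ≤ p)] (hp1 : 1 < p) (hp2 : p < ⊤)
    (core : ∀ {Y : Type} [NormedAddCommGroup Y] [NormedSpace ℝ Y]
      (a : Y → ℕ → ℕ → ℝ) (S : ℕ → Y),
      (∀ T T' n k, a (T + T') n k = a T n k + a T' n k) →
      (∀ (c : ℝ) T n k, a (c • T) n k = c * a T n k) →
      (∀ T K n, K ≤ n → ∑ k ∈ Finset.range K, |a T n k| ≤ ‖T‖) →
      (∀ j, ‖S j‖ ≤ 1) →
      (∀ j k n, j ≤ n → k ≤ n → a (S j) n k = if k = j then 1 else 0) →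
      ¬ IsGrothendieckSpace Y) :
    ¬ IsGrothendieckSpace ((lp (fun n : ℕ => PiLp ⊤ (fun _ : Fin (n + 1) => ℝ)) p) →L[ℝ]
        (lp (fun n : ℕ => PiLp ⊤ (fun _ : Fin (n + 1) => ℝ)) p)) := by
  have hpne : p ≠ 0 := (zero_lt_one.trans hp1).ne'
  have hp0 : 0 < p.toReal := ENNReal.toReal_pos hpne hp2.ne
  set E := fun n : ℕ => PiLp ⊤ (fun _ : Fin (n + 1) => ℝ) with hE
  choose S hS1 hS2 using fun j : ℕ => exists_sop p ⊤ hp0 hL1_top hbv_top j 0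
  set a : (lp E p →L[ℝ] lp E p) → ℕ → ℕ → ℝ :=
    fun T n k => ((T (lp.single p n (bv ⊤ n k))) n) (fi n 0) with ha
  refine core a S ?_ ?_ ?_ ?_ ?_
  · intro T T' n k
    simp only [ha, ContinuousLinearMap.add_apply]
    rfl
  · intro c T n k
    simp only [ha, ContinuousLinearMap.smul_apply]
    rfl
  · intro T K n hKn
    set ε : ℕ → ℝ := fun k => if 0 ≤ a T n k then 1 else -1 with hε
    have hεabs : ∀ k, ε k * a T n k = |a T n k| := by
      intro k
      by_cases h : 0 ≤ a T n k
      · rw [hε]; simp only [if_pos h, one_mul]; exact (abs_of_nonneg h).symm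
      · rw [hε]; simp only [if_neg h, neg_one_mul]; exact (abs_of_neg (lt_of_not_ge h)).symm
    have hε1 : ∀ k, |ε k| ≤ 1 := by
      intro k; rw [hε]; dsimp only; split <;> simp
    set w : PiLp ⊤ (fun _ : Fin (n + 1) => ℝ) := ∑ k ∈ Finset.range K, ε k • bv ⊤ n k with hw
    have hwc : ∀ i : Fin (n + 1), ‖w i‖ ≤ 1 := by
      intro i
      rw [hw, piLp_sum_apply]
      have hterm : ∀ k ∈ Finset.range K, (ε k • bv ⊤ n k) i = if k = (i : ℕ) then ε k else 0 := by
        intro k hk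
        have hkn : k ≤ n := le_trans (Nat.le_of_lt_succ (Nat.lt_succ_of_lt
          (Finset.mem_range.mp hk))) (by omega)
        rw [PiLp.smul_apply, bv_apply, smul_eq_mul]
        by_cases h : k = (i : ℕ)
        · rw [if_pos h, if_pos (Fin.ext (by rw [fi_val n k hkn]; omega)), mul_one]
        · rw [if_neg h, if_neg, mul_zero]
          intro hcon
          exact h (by have := congrArg Fin.val hcon; rw [fi_val n k hkn] at this; omega)
      rw [Finset.sum_congr rfl hterm, Finset.sum_ite_eq' (Finset.range K) (i : ℕ) ε]
      split
      · exact (Real.norm_eq_abs _).le.trans (hε1 _)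
      · simp
    have hwn : ‖w‖ ≤ 1 := norm_top_le n w hwc
    have hsingle_sum : lp.single (E := E) p n w
        = ∑ k ∈ Finset.range K, ε k • lp.single p n (bv ⊤ n k) := by
      rw [hw, lp_single_sum]
      exact Finset.sum_congr rfl fun k _ => by rw [lp.single_smul]
    have key : ∑ k ∈ Finset.range K, |a T n k| = ((T (lp.single p n w)) n) (fi n 0) := by
      rw [hsingle_sum, map_sum, lp.coeFn_sum, Finset.sum_apply, piLp_sum_apply]
      refine (Finset.sum_congr rfl fun k hk => ?_)
      rw [map_smul, ← hεabs k]
      rfl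
    rw [key]
    have hne0 : p ≠ 0 := hpne
    calc ((T (lp.single p n w)) n) (fi n 0) ≤ |((T (lp.single p n w)) n) (fi n 0)| :=
          le_abs_self _
      _ = ‖((T (lp.single p n w)) n) (fi n 0)‖ := (Real.norm_eq_abs _).symm
      _ ≤ ‖(T (lp.single p n w)) n‖ := hL1_top n _ (fi n 0)
      _ ≤ ‖T (lp.single p n w)‖ := lp.norm_apply_le_norm hne0 _ n
      _ ≤ ‖T‖ * ‖lp.single (E := E) p n w‖ := T.le_opNorm _
      _ = ‖T‖ * ‖w‖ := by rw [norm_lp_single p ⊤ hp0]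
      _ ≤ ‖T‖ * 1 := mul_le_mul_of_nonneg_left hwn (norm_nonneg T)
      _ = ‖T‖ := mul_one _
  · intro j
    refine ContinuousLinearMap.opNorm_le_bound _ zero_le_one fun x => ?_
    rw [one_mul]
    exact hS1 j x
  · intro j k n hj hk
    have h1 : (S j (lp.single p n (bv ⊤ n k))) n
        = ((lp.single (E := E) p n (bv ⊤ n k)) n (fi n j)) • bv ⊤ n 0 := hS2 j _ n
    show ((S j (lp.single p n (bv ⊤ n k))) n) (fi n 0) = _
    rw [h1, lp.single_apply_self, PiLp.smul_apply, smul_eq_mul, bv_apply, bv_apply,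
      if_pos rfl, mul_one]
    by_cases h : k = j
    · subst h; rw [if_pos rfl, if_pos rfl]
    · rw [if_neg, if_neg h]
      intro hcon
      exact h (by
        have := congrArg Fin.val hcon
        rw [fi_val n j hj, fi_val n k hk] at this
        omega)

theorem case_one (p : ℝ≥0∞) [Fact (1 ≤ p)] (hp1 : 1 < p) (hp2 : p < ⊤)
    (core : ∀ {Y : Type} [NormedAddCommGroup Y] [NormedSpace ℝ Y]
      (a : Y → ℕ → ℕ → ℝ) (S : ℕ → Y),
      (∀ T T' n k, a (T + T') n k = a T n k + a T' n k) →
      (∀ (c : ℝ) T n k, a (c • T) n k = c * a T n k) →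
      (∀ T K n, K ≤ n → ∑ k ∈ Finset.range K, |a T n k| ≤ ‖T‖) →
      (∀ j, ‖S j‖ ≤ 1) →
      (∀ j k n, j ≤ n → k ≤ n → a (S j) n k = if k = j then 1 else 0) →
      ¬ IsGrothendieckSpace Y) :
    ¬ IsGrothendieckSpace ((lp (fun n : ℕ => PiLp 1 (fun _ : Fin (n + 1) => ℝ)) p) →L[ℝ]
        (lp (fun n : ℕ => PiLp 1 (fun _ : Fin (n + 1) => ℝ)) p)) := by
  have hpne : p ≠ 0 := (zero_lt_one.trans hp1).ne'
  have hp0 : 0 < p.toReal := ENNReal.toReal_pos hpne hp2.ne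
  set E := fun n : ℕ => PiLp 1 (fun _ : Fin (n + 1) => ℝ) with hE
  choose S hS1 hS2 using fun j : ℕ => exists_sop p 1 hp0 hL1_one hbv_one 0 j
  set a : (lp E p →L[ℝ] lp E p) → ℕ → ℕ → ℝ :=
    fun T n k => ((T (lp.single p n (bv 1 n 0))) n) (fi n k) with ha
  refine core a S ?_ ?_ ?_ ?_ ?_
  · intro T T' n k
    simp only [ha, ContinuousLinearMap.add_apply]
    rfl
  · intro c T n k
    simp only [ha, ContinuousLinearMap.smul_apply]
    rfl
  · intro T K n hKn
    set v := (T (lp.single p n (bv 1 n 0))) n with hv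
    have h1 : ∀ k ∈ Finset.range K, |a T n k| = ‖v (fi n k)‖ :=
      fun k _ => (Real.norm_eq_abs _).symm
    rw [Finset.sum_congr rfl h1]
    have hinj : ∀ x ∈ Finset.range K, ∀ y ∈ Finset.range K, fi n x = fi n y → x = y := by
      intro x hx y hy h
      have hxn : x ≤ n := by have := Finset.mem_range.mp hx; omega
      have hyn : y ≤ n := by have := Finset.mem_range.mp hy; omega
      have := congrArg Fin.val h
      rwa [fi_val n x hxn, fi_val n y hyn] at this
    have himg : ∑ i ∈ (Finset.range K).image (fi n), ‖v i‖
        = ∑ k ∈ Finset.range K, ‖v (fi n k)‖ := Finset.sum_image hinj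
    calc ∑ k ∈ Finset.range K, ‖v (fi n k)‖
        = ∑ i ∈ (Finset.range K).image (fi n), ‖v i‖ := himg.symm
      _ ≤ ∑ i : Fin (n + 1), ‖v i‖ :=
          Finset.sum_le_sum_of_subset_of_nonneg (Finset.subset_univ _)
            (fun i _ _ => norm_nonneg _)
      _ = ‖v‖ := (norm_one_eq n v).symm
      _ ≤ ‖T (lp.single p n (bv 1 n 0))‖ := lp.norm_apply_le_norm hpne _ n
      _ ≤ ‖T‖ * ‖lp.single (E := E) p n (bv 1 n 0)‖ := T.le_opNorm _
      _ = ‖T‖ := by rw [norm_lp_single p 1 hp0, hbv_one, mul_one]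
  · intro j
    refine ContinuousLinearMap.opNorm_le_bound _ zero_le_one fun x => ?_
    rw [one_mul]
    exact hS1 j x
  · intro j k n hj hk
    have h1 : (S j (lp.single p n (bv 1 n 0))) n
        = ((lp.single (E := E) p n (bv 1 n 0)) n (fi n 0)) • bv 1 n j := hS2 j _ n
    show ((S j (lp.single p n (bv 1 n 0))) n) (fi n k) = _
    rw [h1, lp.single_apply_self, PiLp.smul_apply, smul_eq_mul, bv_apply, bv_apply,
      if_pos rfl, one_mul]
    by_cases h : k = j
    · subst h; rw [if_pos rfl, if_pos rfl]
    · rw [if_neg, if_neg h]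
      intro hcon
      exact h (by
        have := congrArg Fin.val hcon
        rw [fi_val n j hj, fi_val n k hk] at this
        omega)

end Cases


/-- Let `1 < p < ∞` and let `q = 1` or `q = ∞`.  Then the Banach algebra `B(X)` of all
bounded linear operators on `X = (⊕_{n∈ℕ} ℓ_q^n)_{ℓ_p}` is not a Grothendieck space. -/
theorem stmt_0 (p q : ℝ≥0∞) (hp1 : 1 < p) (hp2 : p < ⊤) (hq : q = 1 ∨ q = ⊤)
    [Fact (1 ≤ p)] [Fact (1 ≤ q)] :
    ¬ IsGrothendieckSpace
      ((lp (fun n : ℕ => PiLp q (fun _ : Fin (n + 1) => ℝ)) p) →L[ℝ]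
        (lp (fun n : ℕ => PiLp q (fun _ : Fin (n + 1) => ℝ)) p)) := by
  rcases hq with rfl | rfl
  · exact case_one p hp1 hp2 fun {Y} _ _ a S h1 h2 h3 h4 h5 =>
      not_isGrothendieckSpace_core a S h1 h2 h3 h4 h5
  · exact case_top p hp1 hp2 fun {Y} _ _ a S h1 h2 h3 h4 h5 =>
      not_isGrothendieckSpace_core a S h1 h2 h3 h4 h5
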